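/- Let C (data c, t, n₁, n₂, n₃, k₁, k₂, k₃) be a C∞-special timelike Frenet curve in E⁴₂ with k₁(s) > 0, k₂(s) ≠ 0, k₃(s) > 0 for all s, and suppose there exist real constants α, β, γ, δ with γ² > 1 and δ² > 1 such that for all s: α·k₂(s) - β·k₃(s) ≠ 0 and δ·k₃(s) = -γ·k₁(s) + k₂(s). Let ε be the sign of α·k₂(s) - β·k₃(s) and set D(s) = √((γ·k₁(s) - k₂(s))² - k₃(s)²). Then the four vector fields t̄ = ε·(γ² - 1)^{-1/2}·(γ·t + n₂), n̄₁ = (ε·D)^{-1}·((γ·k₁ - k₂)·n₁ - k₃·n₃), n̄₂ = ε·(γ² - 1)^{-1/2}·(t + γ·n₂), n̄₃ = (ε·D)^{-1}·(-k₃·n₁ + (γ·k₁ - k₂)·n₃) are mutually g-orthogonal at every s, with g(t̄,t̄) = g(n̄₁,n̄₁) = -1 and g(n̄₂,n̄₂) = g(n̄₃,n̄₃) = 1; moreover the plane spanned by n̄₁(s) and n̄₃(s) equals the plane spanned by n₁(s) and n₃(s) for every s. -/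

import Mathlib

noncomputable section

/-- The indefinite metric of semi-Euclidean space `E⁴₂`:
`g(v,w) = -v₁w₁ - v₂w₂ + v₃w₃ + v₄w₄`. -/
def g4 (v w : Fin 4 → ℝ) : ℝ :=
  -(v 0 * w 0) - v 1 * w 1 + v 2 * w 2 + v 3 * w 3

/-- The semi-Euclidean norm `‖v‖ = √|g(v,v)|` in `E⁴₂`. -/
def nrm4 (v : Fin 4 → ℝ) : ℝ := Real.sqrt |g4 v v|

/-- A `C^∞`-special timelike Frenet curve in `E⁴₂`: a unit-speed timelike curve
with Frenet frame `t, n₁, n₂, n₃` (with `t, n₁` timelike and `n₂, n₃` spacelike)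
and nowhere-vanishing curvatures `k₁, k₂, k₃` satisfying the Frenet equations
`t' = -k₁·n₁`, `n₁' = k₁·t + k₂·n₂`, `n₂' = k₂·n₁ + k₃·n₃`, `n₃' = -k₃·n₂`. -/
structure TimelikeFrenetE42 where
  c : ℝ → Fin 4 → ℝ
  t : ℝ → Fin 4 → ℝ
  n1 : ℝ → Fin 4 → ℝ
  n2 : ℝ → Fin 4 → ℝ
  n3 : ℝ → Fin 4 → ℝ
  k1 : ℝ → ℝ
  k2 : ℝ → ℝ
  k3 : ℝ → ℝ
  smooth_c : ContDiff ℝ (⊤ : ℕ∞) c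
  smooth_t : ContDiff ℝ (⊤ : ℕ∞) t
  smooth_n1 : ContDiff ℝ (⊤ : ℕ∞) n1
  smooth_n2 : ContDiff ℝ (⊤ : ℕ∞) n2
  smooth_n3 : ContDiff ℝ (⊤ : ℕ∞) n3
  smooth_k1 : ContDiff ℝ (⊤ : ℕ∞) k1
  smooth_k2 : ContDiff ℝ (⊤ : ℕ∞) k2
  smooth_k3 : ContDiff ℝ (⊤ : ℕ∞) k3
  deriv_c : ∀ s, HasDerivAt c (t s) s
  unit_t : ∀ s, g4 (t s) (t s) = -1
  unit_n1 : ∀ s, g4 (n1 s) (n1 s) = -1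
  unit_n2 : ∀ s, g4 (n2 s) (n2 s) = 1
  unit_n3 : ∀ s, g4 (n3 s) (n3 s) = 1
  orth_t_n1 : ∀ s, g4 (t s) (n1 s) = 0
  orth_t_n2 : ∀ s, g4 (t s) (n2 s) = 0
  orth_t_n3 : ∀ s, g4 (t s) (n3 s) = 0
  orth_n1_n2 : ∀ s, g4 (n1 s) (n2 s) = 0
  orth_n1_n3 : ∀ s, g4 (n1 s) (n3 s) = 0
  orth_n2_n3 : ∀ s, g4 (n2 s) (n3 s) = 0
  k1_ne : ∀ s, k1 s ≠ 0
  k2_ne : ∀ s, k2 s ≠ 0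
  k3_ne : ∀ s, k3 s ≠ 0
  frenet_t : ∀ s, HasDerivAt t (-(k1 s) • n1 s) s
  frenet_n1 : ∀ s, HasDerivAt n1 (k1 s • t s + k2 s • n2 s) s
  frenet_n2 : ∀ s, HasDerivAt n2 (k2 s • n1 s + k3 s • n3 s) s
  frenet_n3 : ∀ s, HasDerivAt n3 (-(k3 s) • n2 s) s

/-- With the hypotheses of the sufficiency construction, the four vector fields
`t̄ = ε·(γ²-1)^{-1/2}·(γ·t + n₂)`, `n̄₁ = (ε·D)⁻¹·((γ·k₁-k₂)·n₁ - k₃·n₃)`,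
`n̄₂ = ε·(γ²-1)^{-1/2}·(t + γ·n₂)`, `n̄₃ = (ε·D)⁻¹·(-k₃·n₁ + (γ·k₁-k₂)·n₃)`
(where `D = √((γ·k₁-k₂)² - k₃²)` and `ε` is the sign of `α·k₂ - β·k₃`) are mutually
`g`-orthogonal with `g(t̄,t̄) = g(n̄₁,n̄₁) = -1`, `g(n̄₂,n̄₂) = g(n̄₃,n̄₃) = 1`, and the
plane spanned by `n̄₁, n̄₃` equals the plane spanned by `n₁, n₃` at every `s`. -/
lemma g4_expand2 (a b c d : ℝ) (x y z w : Fin 4 → ℝ) :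
    g4 (a • x + b • y) (c • z + d • w) =
      a*c*g4 x z + a*d*g4 x w + b*c*g4 y z + b*d*g4 y w := by
  simp [g4, Pi.add_apply, Pi.smul_apply, smul_eq_mul]; ring

lemma span_pair_comb (x y : Fin 4 → ℝ) (u v w z : ℝ) (h : u * z - v * w ≠ 0) :
    Submodule.span ℝ ({u • x + v • y, w • x + z • y} : Set (Fin 4 → ℝ)) =
    Submodule.span ℝ ({x, y} : Set (Fin 4 → ℝ)) := by
  apply le_antisymm
  · rw [Submodule.span_le]
    rintro p (rfl | rfl) <;> rw [SetLike.mem_coe, Submodule.mem_span_pair]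
    · exact ⟨u, v, rfl⟩
    · exact ⟨w, z, rfl⟩
  · rw [Submodule.span_le]
    rintro p (rfl | rfl) <;> rw [SetLike.mem_coe, Submodule.mem_span_pair]
    · refine ⟨z / (u * z - v * w), -v / (u * z - v * w), ?_⟩
      funext i
      simp only [Pi.add_apply, Pi.smul_apply, smul_eq_mul]
      simp only [div_mul_eq_mul_div]; rw [← add_div, div_eq_iff h]
      ring
    · refine ⟨-w / (u * z - v * w), u / (u * z - v * w), ?_⟩
      funext i
      simp only [Pi.add_apply, Pi.smul_apply, smul_eq_mul]
      simp only [div_mul_eq_mul_div]; rw [← add_div, div_eq_iff h]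
      ring

set_option maxHeartbeats 2000000 in
theorem bertrand13_E42_mate_frame_orthonormal
    (C : TimelikeFrenetE42)
    (hk1 : ∀ s, 0 < C.k1 s) (hk3 : ∀ s, 0 < C.k3 s)
    (α β γ δ ε : ℝ) (hγ2 : γ ^ 2 > 1) (hδ2 : δ ^ 2 > 1)
    (h1 : ∀ s, α * C.k2 s - β * C.k3 s ≠ 0)
    (h3 : ∀ s, δ * C.k3 s = -(γ * C.k1 s) + C.k2 s)
    (hε : ∀ s, ε = Real.sign (α * C.k2 s - β * C.k3 s)) :
    ∀ s,
      let D := Real.sqrt ((γ * C.k1 s - C.k2 s) ^ 2 - C.k3 s ^ 2)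
      let tb := (ε * (Real.sqrt (γ ^ 2 - 1))⁻¹) • (γ • C.t s + C.n2 s)
      let nb1 := (ε * D)⁻¹ • ((γ * C.k1 s - C.k2 s) • C.n1 s - C.k3 s • C.n3 s)
      let nb2 := (ε * (Real.sqrt (γ ^ 2 - 1))⁻¹) • (C.t s + γ • C.n2 s)
      let nb3 := (ε * D)⁻¹ • (-(C.k3 s) • C.n1 s + (γ * C.k1 s - C.k2 s) • C.n3 s)
      g4 tb tb = -1 ∧ g4 nb1 nb1 = -1 ∧ g4 nb2 nb2 = 1 ∧ g4 nb3 nb3 = 1 ∧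
      g4 tb nb1 = 0 ∧ g4 tb nb2 = 0 ∧ g4 tb nb3 = 0 ∧
      g4 nb1 nb2 = 0 ∧ g4 nb1 nb3 = 0 ∧ g4 nb2 nb3 = 0 ∧
      Submodule.span ℝ ({nb1, nb3} : Set (Fin 4 → ℝ)) =
        Submodule.span ℝ ({C.n1 s, C.n3 s} : Set (Fin 4 → ℝ)) := by
  intro s
  dsimp only
  -- basic scalars
  have hεs := hε s
  have hne := h1 s
  have hε1 : ε = 1 ∨ ε = -1 := by
    rcases lt_or_gt_of_ne hne with h | h
    · right; rw [hεs, Real.sign_of_neg h]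
    · left; rw [hεs, Real.sign_of_pos h]
  have hε2 : ε ^ 2 = 1 := by rcases hε1 with h | h <;> rw [h] <;> norm_num
  have hεne : ε ≠ 0 := by rcases hε1 with h | h <;> rw [h] <;> norm_num
  set A : ℝ := γ * C.k1 s - C.k2 s with hA
  have hAδ : A = -(δ * C.k3 s) := by rw [hA]; linarith [h3 s]
  have hQpos : 0 < A ^ 2 - C.k3 s ^ 2 := by
    have hk3s := hk3 s
    have hA2 : A ^ 2 = δ ^ 2 * C.k3 s ^ 2 := by rw [hAδ]; ring
    nlinarith [mul_pos (sub_pos.mpr hδ2) (pow_pos hk3s 2)]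
  set D : ℝ := Real.sqrt (A ^ 2 - C.k3 s ^ 2) with hD
  have hD2 : D ^ 2 = A ^ 2 - C.k3 s ^ 2 := Real.sq_sqrt hQpos.le
  have hDpos : 0 < D := Real.sqrt_pos.mpr hQpos
  have hDne : D ≠ 0 := hDpos.ne'
  have hγpos : 0 < γ ^ 2 - 1 := by linarith
  set G : ℝ := Real.sqrt (γ ^ 2 - 1) with hG
  have hG2 : G ^ 2 = γ ^ 2 - 1 := Real.sq_sqrt hγpos.le
  have hGne : G ≠ 0 := (Real.sqrt_pos.mpr hγpos).ne'
  set a : ℝ := ε * G⁻¹ with ha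
  set b : ℝ := (ε * D)⁻¹ with hb
  have ha2 : a ^ 2 = (γ ^ 2 - 1)⁻¹ := by
    rw [ha, mul_pow, hε2, one_mul, ← hG2, inv_pow]
  have hb2 : b ^ 2 = (A ^ 2 - C.k3 s ^ 2)⁻¹ := by
    rw [hb, inv_pow, mul_pow, hε2, one_mul, hD2]
  clear_value A D G a b
  -- rewrite the four vectors as linear combinations
  have htb : a • (γ • C.t s + C.n2 s)
      = (a * γ) • C.t s + a • C.n2 s := by
    funext i
    simp only [Pi.add_apply, Pi.smul_apply, smul_eq_mul]; ring
  have hnb1 : b • (A • C.n1 s - C.k3 s • C.n3 s)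
      = (b * A) • C.n1 s + (b * -(C.k3 s)) • C.n3 s := by
    funext i
    simp only [Pi.add_apply, Pi.sub_apply, Pi.smul_apply, smul_eq_mul]; ring
  have hnb2 : a • (C.t s + γ • C.n2 s)
      = a • C.t s + (a * γ) • C.n2 s := by
    funext i
    simp only [Pi.add_apply, Pi.smul_apply, smul_eq_mul]; ring
  have hnb3 : b • (-(C.k3 s) • C.n1 s + A • C.n3 s)
      = (b * -(C.k3 s)) • C.n1 s + (b * A) • C.n3 s := by
    funext i
    simp only [Pi.add_apply, Pi.neg_apply, Pi.smul_apply, smul_eq_mul]; ring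
  rw [htb, hnb1, hnb2, hnb3]
  have e1 := C.unit_t s
  have e2 := C.unit_n1 s
  have e3 := C.unit_n2 s
  have e4 := C.unit_n3 s
  have o1 := C.orth_t_n1 s
  have o2 := C.orth_t_n2 s
  have o3 := C.orth_t_n3 s
  have o4 := C.orth_n1_n2 s
  have o5 := C.orth_n1_n3 s
  have o6 := C.orth_n2_n3 s
  have g4symm : ∀ v w : Fin 4 → ℝ, g4 v w = g4 w v := by
    intro v w; simp [g4]; ring
  refine ⟨?_, ?_, ?_, ?_, ?_, ?_, ?_, ?_, ?_, ?_, ?_⟩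
  · rw [g4_expand2]
    simp only [g4symm (C.n1 s) (C.t s), g4symm (C.n2 s) (C.t s), g4symm (C.n3 s) (C.t s),
      g4symm (C.n2 s) (C.n1 s), g4symm (C.n3 s) (C.n1 s), g4symm (C.n3 s) (C.n2 s),
      e1, e2, e3, e4, o1, o2, o3, o4, o5, o6]
    have h : a ^ 2 * (γ ^ 2 - 1) = 1 := by rw [ha2]; field_simp
    nlinarith [h]
  · rw [g4_expand2]
    simp only [g4symm (C.n1 s) (C.t s), g4symm (C.n2 s) (C.t s), g4symm (C.n3 s) (C.t s),
      g4symm (C.n2 s) (C.n1 s), g4symm (C.n3 s) (C.n1 s), g4symm (C.n3 s) (C.n2 s),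
      e1, e2, e3, e4, o1, o2, o3, o4, o5, o6]
    have h : b ^ 2 * (A ^ 2 - C.k3 s ^ 2) = 1 := by rw [hb2]; field_simp
    nlinarith [h]
  · rw [g4_expand2]
    simp only [g4symm (C.n1 s) (C.t s), g4symm (C.n2 s) (C.t s), g4symm (C.n3 s) (C.t s),
      g4symm (C.n2 s) (C.n1 s), g4symm (C.n3 s) (C.n1 s), g4symm (C.n3 s) (C.n2 s),
      e1, e2, e3, e4, o1, o2, o3, o4, o5, o6]
    have h : a ^ 2 * (γ ^ 2 - 1) = 1 := by rw [ha2]; field_simp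
    nlinarith [h]
  · rw [g4_expand2]
    simp only [g4symm (C.n1 s) (C.t s), g4symm (C.n2 s) (C.t s), g4symm (C.n3 s) (C.t s),
      g4symm (C.n2 s) (C.n1 s), g4symm (C.n3 s) (C.n1 s), g4symm (C.n3 s) (C.n2 s),
      e1, e2, e3, e4, o1, o2, o3, o4, o5, o6]
    have h : b ^ 2 * (A ^ 2 - C.k3 s ^ 2) = 1 := by rw [hb2]; field_simp
    nlinarith [h]
  · rw [g4_expand2]
    simp only [g4symm (C.n1 s) (C.t s), g4symm (C.n2 s) (C.t s), g4symm (C.n3 s) (C.t s),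
      g4symm (C.n2 s) (C.n1 s), g4symm (C.n3 s) (C.n1 s), g4symm (C.n3 s) (C.n2 s),
      e1, e2, e3, e4, o1, o2, o3, o4, o5, o6]
    ring
  · rw [g4_expand2]
    simp only [g4symm (C.n1 s) (C.t s), g4symm (C.n2 s) (C.t s), g4symm (C.n3 s) (C.t s),
      g4symm (C.n2 s) (C.n1 s), g4symm (C.n3 s) (C.n1 s), g4symm (C.n3 s) (C.n2 s),
      e1, e2, e3, e4, o1, o2, o3, o4, o5, o6]
    ring
  · rw [g4_expand2]
    simp only [g4symm (C.n1 s) (C.t s), g4symm (C.n2 s) (C.t s), g4symm (C.n3 s) (C.t s),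
      g4symm (C.n2 s) (C.n1 s), g4symm (C.n3 s) (C.n1 s), g4symm (C.n3 s) (C.n2 s),
      e1, e2, e3, e4, o1, o2, o3, o4, o5, o6]
    ring
  · rw [g4_expand2]
    simp only [g4symm (C.n1 s) (C.t s), g4symm (C.n2 s) (C.t s), g4symm (C.n3 s) (C.t s),
      g4symm (C.n2 s) (C.n1 s), g4symm (C.n3 s) (C.n1 s), g4symm (C.n3 s) (C.n2 s),
      e1, e2, e3, e4, o1, o2, o3, o4, o5, o6]
    ring
  · rw [g4_expand2]
    simp only [g4symm (C.n1 s) (C.t s), g4symm (C.n2 s) (C.t s), g4symm (C.n3 s) (C.t s),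
      g4symm (C.n2 s) (C.n1 s), g4symm (C.n3 s) (C.n1 s), g4symm (C.n3 s) (C.n2 s),
      e1, e2, e3, e4, o1, o2, o3, o4, o5, o6]
    ring
  · rw [g4_expand2]
    simp only [g4symm (C.n1 s) (C.t s), g4symm (C.n2 s) (C.t s), g4symm (C.n3 s) (C.t s),
      g4symm (C.n2 s) (C.n1 s), g4symm (C.n3 s) (C.n1 s), g4symm (C.n3 s) (C.n2 s),
      e1, e2, e3, e4, o1, o2, o3, o4, o5, o6]
    ring
  · -- span equality
    have hbne : b ≠ 0 := by rw [hb]; exact inv_ne_zero (mul_ne_zero hεne hDne)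
    have hd : (b * A) * (b * A) - (b * -(C.k3 s)) * (b * -(C.k3 s)) ≠ 0 := by
      have he : (b * A) * (b * A) - (b * -(C.k3 s)) * (b * -(C.k3 s))
          = b ^ 2 * (A ^ 2 - C.k3 s ^ 2) := by ring
      rw [he]
      exact mul_ne_zero (pow_ne_zero _ hbne) hQpos.ne'
    exact span_pair_comb _ _ _ _ _ _ hd
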